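/- arXiv:2104.01314 — 6 statements merged into one kernel-verified Lean document; each statement's English description precedes it below -/
import Mathlib

section
/- Let g* be μ_{g*}-strongly convex with μ_{g*} ≥ 0, β > 0, and ẏ ∈ ℝ^n. Then u ↦ g_β(u, ẏ) is convex on ℝ^n, and for all u, û ∈ dom g: g_β(û, ẏ) + ⟨y*_β(û, ẏ), u − û⟩ ≤ g_β(u, ẏ) − ((β + μ_{g*})/2)‖y*_β(û, ẏ) − y*_β(u, ẏ)‖²; in particular ∇_u g_β(u, ẏ) = y*_β(u, ẏ) and u ↦ g_β(u, ẏ) has 1/(β + μ_{g*})-Lipschitz continuous gradient. -/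
open RealInnerProductSpace Set

/-- Lemma 4(a): with `g*` `μ_{g*}`-strongly convex (`μ_{g*} ≥ 0`)
and `β > 0`, the smoothed function `u ↦ g_β(u, ẏ)` is convex on `ℝ^n`, it satisfies
`g_β(û, ẏ) + ⟪y*_β(û, ẏ), u - û⟫ ≤ g_β(u, ẏ) - ((β+μ_{g*})/2)‖y*_β(û, ẏ) - y*_β(u, ẏ)‖²`,
its gradient at `u` is `y*_β(u, ẏ)`, and the gradient map is
`1/(β+μ_{g*})`-Lipschitz continuous. -/
theorem stmt13 {n : ℕ}
    (gstar : EuclideanSpace ℝ (Fin n) → ℝ) (Sg : Set (EuclideanSpace ℝ (Fin n)))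
    (hSg : Convex ℝ Sg) (hSgc : IsClosed Sg)
    (μg : ℝ) (hμg : 0 ≤ μg)
    -- `g*` is `μ_{g*}`-strongly convex
    (hgstar : ConvexOn ℝ Sg (fun y => gstar y - μg / 2 * ‖y‖ ^ 2))
    (β : ℝ) (hβ : 0 < β)
    (ydot : EuclideanSpace ℝ (Fin n))
    -- `y*_β(u, ẏ)` is the (unique) maximizer defining `g_β(u, ẏ)`
    (ystar : EuclideanSpace ℝ (Fin n) → EuclideanSpace ℝ (Fin n))
    (hystar : ∀ u, ystar u ∈ Sg ∧
      IsMaxOn (fun z => ⟪u, z⟫ - gstar z - β / 2 * ‖z - ydot‖ ^ 2) Sg (ystar u)) :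
    -- `u ↦ g_β(u, ẏ)` is convex on `ℝ^n`
    ConvexOn ℝ univ
      (fun u => ⟪u, ystar u⟫ - gstar (ystar u) - β / 2 * ‖ystar u - ydot‖ ^ 2) ∧
    -- the key inequality (eq:key_bound_apdx1)
    (∀ u uhat : EuclideanSpace ℝ (Fin n),
      (⟪uhat, ystar uhat⟫ - gstar (ystar uhat) - β / 2 * ‖ystar uhat - ydot‖ ^ 2) +
          ⟪ystar uhat, u - uhat⟫ ≤
        (⟪u, ystar u⟫ - gstar (ystar u) - β / 2 * ‖ystar u - ydot‖ ^ 2) -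
          (β + μg) / 2 * ‖ystar uhat - ystar u‖ ^ 2) ∧
    -- `∇_u g_β(u, ẏ) = y*_β(u, ẏ)`
    (∀ u : EuclideanSpace ℝ (Fin n),
      HasGradientAt
        (fun v => ⟪v, ystar v⟫ - gstar (ystar v) - β / 2 * ‖ystar v - ydot‖ ^ 2)
        (ystar u) u) ∧
    -- the gradient is `1/(β+μ_{g*})`-Lipschitz continuous
    LipschitzWith (Real.toNNReal (1 / (β + μg))) ystar := by
  have hm : 0 < β + μg := by linarith
  set G : EuclideanSpace ℝ (Fin n) → ℝ :=
    fun u => ⟪u, ystar u⟫ - gstar (ystar u) - β / 2 * ‖ystar u - ydot‖ ^ 2 with hG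
  clear_value G
  have hGa : ∀ w, G w = ⟪w, ystar w⟫ - gstar (ystar w) - β / 2 * ‖ystar w - ydot‖ ^ 2 := by
    intro w; rw [hG]
  -- key inequality
  have key : ∀ u uhat : EuclideanSpace ℝ (Fin n),
      G uhat + ⟪ystar uhat, u - uhat⟫ ≤
        G u - (β + μg) / 2 * ‖ystar uhat - ystar u‖ ^ 2 := by
    intro u uhat
    have hz1 : ystar u ∈ Sg := (hystar u).1
    have hz2 : ystar uhat ∈ Sg := (hystar uhat).1
    set h : EuclideanSpace ℝ (Fin n) → ℝ :=
      fun z => gstar z + β / 2 * ‖z - ydot‖ ^ 2 - ⟪u, z⟫ with hhd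
    clear_value h
    have hha : ∀ z, h z = gstar z + β / 2 * ‖z - ydot‖ ^ 2 - ⟪u, z⟫ := by
      intro z; rw [hhd]
    have hmin : ∀ z ∈ Sg, h (ystar u) ≤ h z := by
      intro z hz
      have h0 : ⟪u, z⟫ - gstar z - β / 2 * ‖z - ydot‖ ^ 2 ≤
          ⟪u, ystar u⟫ - gstar (ystar u) - β / 2 * ‖ystar u - ydot‖ ^ 2 := (hystar u).2 hz
      rw [hha, hha]
      linarith
    have haff : ConvexOn ℝ Sg
        (fun z => ⟪-(β • ydot) - u, z⟫ + β / 2 * ‖ydot‖ ^ 2) := by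
      refine ⟨hSg, fun x hx y hy a b ha hb hab => le_of_eq ?_⟩
      simp only [inner_add_right, real_inner_smul_right, smul_eq_mul]
      linear_combination (-(β / 2 * ‖ydot‖ ^ 2)) * hab
    have hHconv : ConvexOn ℝ Sg (fun z => h z - (β + μg) / 2 * ‖z‖ ^ 2) := by
      have hsum := hgstar.add haff
      have heq : (fun z => h z - (β + μg) / 2 * ‖z‖ ^ 2) =
          fun z => (gstar z - μg / 2 * ‖z‖ ^ 2) +
            (⟪-(β • ydot) - u, z⟫ + β / 2 * ‖ydot‖ ^ 2) := by
        funext z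
        rw [hha]
        have e1 : ‖z - ydot‖ ^ 2 = ‖z‖ ^ 2 - 2 * ⟪z, ydot⟫ + ‖ydot‖ ^ 2 :=
          norm_sub_sq_real z ydot
        have e2 : ⟪-(β • ydot) - u, z⟫ = -(β * ⟪ydot, z⟫) - ⟪u, z⟫ := by
          simp only [inner_sub_left, inner_neg_left, real_inner_smul_left]
        have e3 : ⟪z, ydot⟫ = ⟪ydot, z⟫ := real_inner_comm _ _
        rw [e1, e2]
        linear_combination (-β) * e3
      rw [heq]
      exact hsum
    have hstep : ∀ t : ℝ, 0 < t → t < 1 →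
        h (ystar u) + (β + μg) / 2 * (1 - t) * ‖ystar uhat - ystar u‖ ^ 2 ≤ h (ystar uhat) := by
      intro t ht ht1
      have hzt : (1 - t) • ystar u + t • ystar uhat ∈ Sg :=
        hSg hz1 hz2 (by linarith) ht.le (by ring)
      have h1 : h ((1 - t) • ystar u + t • ystar uhat) -
            (β + μg) / 2 * ‖(1 - t) • ystar u + t • ystar uhat‖ ^ 2 ≤
          (1 - t) * (h (ystar u) - (β + μg) / 2 * ‖ystar u‖ ^ 2) +
            t * (h (ystar uhat) - (β + μg) / 2 * ‖ystar uhat‖ ^ 2) := by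
        have := hHconv.2 hz1 hz2 (by linarith : (0:ℝ) ≤ 1 - t) ht.le (by ring)
        simpa using this
      have h2 : h (ystar u) ≤ h ((1 - t) • ystar u + t • ystar uhat) := hmin _ hzt
      have h3 : ‖(1 - t) • ystar u + t • ystar uhat‖ ^ 2 =
          (1 - t) * ‖ystar u‖ ^ 2 + t * ‖ystar uhat‖ ^ 2 -
            t * (1 - t) * ‖ystar uhat - ystar u‖ ^ 2 := by
        have eΔ : ‖ystar uhat - ystar u‖ ^ 2 =
            ‖ystar uhat‖ ^ 2 - 2 * ⟪ystar uhat, ystar u⟫ + ‖ystar u‖ ^ 2 :=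
          norm_sub_sq_real _ _
        have eL : ‖(1 - t) • ystar u + t • ystar uhat‖ ^ 2 =
            ‖(1 - t) • ystar u‖ ^ 2 + 2 * ⟪(1 - t) • ystar u, t • ystar uhat⟫ +
              ‖t • ystar uhat‖ ^ 2 :=
          norm_add_sq_real _ _
        have c1 : ⟪(1 - t) • ystar u, t • ystar uhat⟫ =
            (1 - t) * (t * ⟪ystar u, ystar uhat⟫) := by
          rw [real_inner_smul_left, real_inner_smul_right]
        have c2 : ‖(1 - t) • ystar u‖ ^ 2 = (1 - t) ^ 2 * ‖ystar u‖ ^ 2 := by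
          rw [norm_smul, mul_pow, Real.norm_eq_abs, sq_abs]
        have c3 : ‖t • ystar uhat‖ ^ 2 = t ^ 2 * ‖ystar uhat‖ ^ 2 := by
          rw [norm_smul, mul_pow, Real.norm_eq_abs, sq_abs]
        have c4 : ⟪ystar uhat, ystar u⟫ = ⟪ystar u, ystar uhat⟫ := real_inner_comm _ _
        rw [eL, c1, c2, c3, eΔ, c4]
        ring
      rw [h3] at h1
      have h4 : t * (h (ystar u) +
            (β + μg) / 2 * (1 - t) * ‖ystar uhat - ystar u‖ ^ 2) ≤ t * h (ystar uhat) := by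
        nlinarith [h1, h2]
      exact le_of_mul_le_mul_left h4 ht
    have hkey0 : h (ystar u) + (β + μg) / 2 * ‖ystar uhat - ystar u‖ ^ 2 ≤ h (ystar uhat) := by
      have hcont : Continuous (fun t : ℝ =>
          h (ystar u) + (β + μg) / 2 * (1 - t) * ‖ystar uhat - ystar u‖ ^ 2) :=
        continuous_const.add
          (((continuous_const.mul (continuous_const.sub continuous_id)).mul continuous_const))
      have hten : Filter.Tendsto
          (fun t : ℝ => h (ystar u) + (β + μg) / 2 * (1 - t) * ‖ystar uhat - ystar u‖ ^ 2)
          (nhdsWithin 0 (Set.Ioi 0))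
          (nhds (h (ystar u) +
            (β + μg) / 2 * (1 - (0:ℝ)) * ‖ystar uhat - ystar u‖ ^ 2)) :=
        Filter.Tendsto.mono_left (hcont.tendsto 0) nhdsWithin_le_nhds
      have hev : ∀ᶠ t in nhdsWithin (0:ℝ) (Set.Ioi 0),
          h (ystar u) + (β + μg) / 2 * (1 - t) * ‖ystar uhat - ystar u‖ ^ 2 ≤ h (ystar uhat) := by
        filter_upwards [Ioo_mem_nhdsGT_of_mem
          (by norm_num : (0:ℝ) ∈ Set.Ico (0:ℝ) 1)] with t ht
        exact hstep t ht.1 ht.2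
      have := le_of_tendsto hten hev
      linarith
    rw [hha, hha] at hkey0
    have hip : ⟪ystar uhat, u - uhat⟫ = ⟪u, ystar uhat⟫ - ⟪uhat, ystar uhat⟫ := by
      rw [inner_sub_right, real_inner_comm (ystar uhat) u, real_inner_comm (ystar uhat) uhat]
    rw [hGa, hGa]
    linarith
  -- Lipschitz estimate
  have lip : ∀ x y, ‖ystar x - ystar y‖ ≤ 1 / (β + μg) * ‖x - y‖ := by
    intro x y
    have k1 := key x y
    have k2 := key y x
    have hnr2 : ‖ystar x - ystar y‖ ^ 2 = ‖ystar y - ystar x‖ ^ 2 := by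
      rw [norm_sub_rev]
    have hip1 : ⟪ystar y, x - y⟫ + ⟪ystar x, y - x⟫ =
        -⟪ystar x - ystar y, x - y⟫ := by
      simp only [inner_sub_left, inner_sub_right]
      ring
    rw [hnr2] at k2
    have h5 : (β + μg) * ‖ystar y - ystar x‖ ^ 2 ≤ ⟪ystar x - ystar y, x - y⟫ := by
      linarith
    have hcs := real_inner_le_norm (ystar x - ystar y) (x - y)
    rcases eq_or_lt_of_le (norm_nonneg (ystar x - ystar y)) with h0 | h0
    · rw [← h0]
      positivity
    · have hnr : ‖ystar x - ystar y‖ = ‖ystar y - ystar x‖ := norm_sub_rev _ _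
      rw [hnr] at h0 hcs ⊢
      have h6 : (β + μg) * ‖ystar y - ystar x‖ ≤ ‖x - y‖ := by
        nlinarith
      calc ‖ystar y - ystar x‖
          = 1 / (β + μg) * ((β + μg) * ‖ystar y - ystar x‖) := by field_simp
        _ ≤ 1 / (β + μg) * ‖x - y‖ :=
            mul_le_mul_of_nonneg_left h6 (by positivity)
  -- gradient
  have grad : ∀ u, HasGradientAt G (ystar u) u := by
    intro u
    rw [hasGradientAt_iff_isLittleO, Asymptotics.isLittleO_iff]
    intro c hc
    have hL : (0:ℝ) < 1 / (β + μg) := by positivity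
    rw [Metric.eventually_nhds_iff]
    refine ⟨c / (1 / (β + μg)), by positivity, fun {v} hv => ?_⟩
    have hd : ‖v - u‖ < c / (1 / (β + μg)) := by rwa [← dist_eq_norm]
    have k1 := key v u
    have nn1 : 0 ≤ (β + μg) / 2 * ‖ystar u - ystar v‖ ^ 2 := by positivity
    have lb : 0 ≤ G v - G u - ⟪ystar u, v - u⟫ := by linarith
    have k2 := key u v
    have nn2 : 0 ≤ (β + μg) / 2 * ‖ystar v - ystar u‖ ^ 2 := by positivity
    have hipv : ⟪ystar v, u - v⟫ = -⟪ystar v, v - u⟫ := by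
      simp only [inner_sub_right]
      ring
    have hipw : ⟪ystar v - ystar u, v - u⟫ =
        ⟪ystar v, v - u⟫ - ⟪ystar u, v - u⟫ := by
      simp [inner_sub_left]
    have ub : G v - G u - ⟪ystar u, v - u⟫ ≤ ⟪ystar v - ystar u, v - u⟫ := by
      linarith
    have hcs := real_inner_le_norm (ystar v - ystar u) (v - u)
    have hlip := lip v u
    have bound : G v - G u - ⟪ystar u, v - u⟫ ≤
        1 / (β + μg) * ‖v - u‖ * ‖v - u‖ := by
      have h7 : ‖ystar v - ystar u‖ * ‖v - u‖ ≤
          1 / (β + μg) * ‖v - u‖ * ‖v - u‖ :=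
        mul_le_mul_of_nonneg_right hlip (norm_nonneg _)
      linarith
    have habs : ‖G v - G u - ⟪ystar u, v - u⟫‖ ≤
        1 / (β + μg) * ‖v - u‖ * ‖v - u‖ := by
      rw [Real.norm_eq_abs, abs_of_nonneg lb]
      exact bound
    have hfin : 1 / (β + μg) * ‖v - u‖ ≤ c := by
      have := (lt_div_iff₀ hL).mp hd
      linarith
    calc ‖G v - G u - ⟪ystar u, v - u⟫‖
        ≤ 1 / (β + μg) * ‖v - u‖ * ‖v - u‖ := habs
      _ ≤ c * ‖v - u‖ := mul_le_mul_of_nonneg_right hfin (norm_nonneg _)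
  -- convexity
  have conv : ConvexOn ℝ univ G := by
    refine ⟨convex_univ, fun x _ y _ a b ha hb hab => ?_⟩
    simp only [smul_eq_mul]
    set w := a • x + b • y with hw
    clear_value w
    have k1 := key x w
    have k2 := key y w
    have n1 : 0 ≤ (β + μg) / 2 * ‖ystar w - ystar x‖ ^ 2 := by positivity
    have n2 : 0 ≤ (β + μg) / 2 * ‖ystar w - ystar y‖ ^ 2 := by positivity
    have k1' : G w + ⟪ystar w, x - w⟫ ≤ G x := by linarith
    have k2' : G w + ⟪ystar w, y - w⟫ ≤ G y := by linarith
    have hz : a * ⟪ystar w, x - w⟫ + b * ⟪ystar w, y - w⟫ = 0 := by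
      rw [← real_inner_smul_right, ← real_inner_smul_right, ← inner_add_right]
      have hb' : b = 1 - a := by linarith
      have hzz : a • (x - w) + b • (y - w) = 0 := by
        rw [hw, hb']
        module
      rw [hzz, inner_zero_right]
    have k1'' := mul_le_mul_of_nonneg_left k1' ha
    have k2'' := mul_le_mul_of_nonneg_left k2' hb
    have hGw : a * G w + b * G w = G w := by
      rw [← add_mul, hab, one_mul]
    linarith [k1'', k2'', hz, hGw]
  -- Lipschitz
  have lipw : LipschitzWith (Real.toNNReal (1 / (β + μg))) ystar := by
    apply LipschitzWith.of_dist_le_mul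
    intro x y
    rw [dist_eq_norm, dist_eq_norm]
    have hco : (Real.toNNReal (1 / (β + μg)) : ℝ) = 1 / (β + μg) :=
      Real.coe_toNNReal _ (by positivity)
    rw [hco]
    exact lip x y
  refine ⟨conv, fun u uhat => ?_, grad, lipw⟩
  have hk := key u uhat
  simp only [hGa] at hk
  exact hk
end

section
/- Let β > 0, ẏ ∈ ℝ^n, and u ∈ dom g. Then g_β(u, ẏ) ≤ g(u) ≤ g_β(u, ẏ) + (β/2)[D_g(ẏ)]², where D_g(ẏ) := sup{‖y − ẏ‖ : y ∈ ∂g(u)} is the supremum of distances from ẏ to subgradients of g at u. -/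
open RealInnerProductSpace Set

/-- Lemma 4(b): for `β > 0`, `ẏ ∈ ℝ^n`, and `u ∈ dom g`, the
smoothed function satisfies `g_β(u, ẏ) ≤ g(u) ≤ g_β(u, ẏ) + (β/2)[D_g(ẏ)]²`, where
`D_g(ẏ) = sup{‖y - ẏ‖ : y ∈ ∂g(u)}`. -/
theorem stmt14 {n : ℕ}
    (g : EuclideanSpace ℝ (Fin n) → ℝ) (Sgdom : Set (EuclideanSpace ℝ (Fin n)))
    (hSgdom : Convex ℝ Sgdom) (hSgdomc : IsClosed Sgdom)
    (hg : ConvexOn ℝ Sgdom g) (hglsc : LowerSemicontinuousOn g Sgdom)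
    -- `g*` is the Fenchel conjugate of `g`, finite on its domain `Sgstar`
    (gstar : EuclideanSpace ℝ (Fin n) → ℝ) (Sgstar : Set (EuclideanSpace ℝ (Fin n)))
    (hconj : ∀ z ∈ Sgstar,
      IsLUB {r : ℝ | ∃ u' ∈ Sgdom, r = ⟪z, u'⟫ - g u'} (gstar z))
    -- every subgradient of `g` belongs to `dom g* = Sgstar`
    (hsubdom : ∀ u' ∈ Sgdom, ∀ v : EuclideanSpace ℝ (Fin n),
      (∀ w ∈ Sgdom, g u' + ⟪v, w - u'⟫ ≤ g w) → v ∈ Sgstar)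
    (β : ℝ) (hβ : 0 < β)
    (ydot : EuclideanSpace ℝ (Fin n))
    (u : EuclideanSpace ℝ (Fin n)) (hu : u ∈ Sgdom)
    -- the smoothed value `g_β(u, ẏ)`
    (gβ : ℝ)
    (hgβ : IsGreatest
      {r : ℝ | ∃ z ∈ Sgstar, r = ⟪u, z⟫ - gstar z - β / 2 * ‖z - ydot‖ ^ 2} gβ)
    -- `D_g(ẏ) = sup{‖y - ẏ‖ : y ∈ ∂g(u)}`
    (Dg : ℝ)
    (hDg : IsLUB {r : ℝ | ∃ v : EuclideanSpace ℝ (Fin n),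
      (∀ w ∈ Sgdom, g u + ⟪v, w - u⟫ ≤ g w) ∧ r = ‖v - ydot‖} Dg) :
    gβ ≤ g u ∧ g u ≤ gβ + β / 2 * Dg ^ 2 := by
  obtain ⟨⟨z, hz, hzval⟩, hub⟩ := hgβ
  constructor
  · have h1 : ⟪z, u⟫ - g u ≤ gstar z := (hconj z hz).1 ⟨u, hu, rfl⟩
    have h2 : (0:ℝ) ≤ β / 2 * ‖z - ydot‖ ^ 2 := by positivity
    rw [hzval, real_inner_comm]
    linarith
  · obtain ⟨v, hv, hvd⟩ : ∃ v, (∀ w ∈ Sgdom, g u + ⟪v, w - u⟫ ≤ g w) ∧ ‖v - ydot‖ ≤ Dg := by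
      rcases Set.eq_empty_or_nonempty {r : ℝ | ∃ v : EuclideanSpace ℝ (Fin n),
          (∀ w ∈ Sgdom, g u + ⟪v, w - u⟫ ≤ g w) ∧ r = ‖v - ydot‖} with he | ⟨r, hr⟩
      · exfalso
        have h := hDg.2 (fun r hr => absurd (he ▸ hr) (Set.notMem_empty r) :
          Dg - 1 ∈ upperBounds _)
        linarith
      · obtain ⟨v, hv, hr'⟩ := hr
        exact ⟨v, hv, hr' ▸ hDg.1 ⟨v, hv, hr'⟩⟩
    have hvS : v ∈ Sgstar := hsubdom u hu v hv
    have hgs_le : gstar v ≤ ⟪v, u⟫ - g u := by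
      apply (hconj v hvS).2
      rintro r ⟨u', hu', rfl⟩
      have h1 := hv u' hu'
      have h2 : ⟪v, u' - u⟫ = ⟪v, u'⟫ - ⟪v, u⟫ := inner_sub_right v u' u
      linarith
    have hmem : ⟪u, v⟫ - gstar v - β / 2 * ‖v - ydot‖ ^ 2 ≤ gβ := hub ⟨v, hvS, rfl⟩
    have hDg0 : (0:ℝ) ≤ Dg := le_trans (norm_nonneg _) hvd
    have hsq : β / 2 * ‖v - ydot‖ ^ 2 ≤ β / 2 * Dg ^ 2 :=
      mul_le_mul_of_nonneg_left (pow_le_pow_left₀ (norm_nonneg _) hvd 2) (by positivity)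
    have hcomm : ⟪u, v⟫ = ⟪v, u⟫ := real_inner_comm v u
    linarith
end

section
/- Let u ∈ dom g and ẏ ∈ ℝ^n. Then β ↦ g_β(u, ẏ) is convex on (0, ∞), and for all β̂ ≥ β > 0: g_β(u, ẏ) ≤ g_β̂(u, ẏ) + ((β̂ − β)/2)‖y*_β(u, ẏ) − ẏ‖². -/
open RealInnerProductSpace Set

/-- Lemma 4(c): for fixed `u ∈ dom g` and `ẏ ∈ ℝ^n`, the map
`β ↦ g_β(u, ẏ)` is convex on `(0, ∞)`, and for all `β̂ ≥ β > 0`,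
`g_β(u, ẏ) ≤ g_β̂(u, ẏ) + ((β̂ - β)/2)‖y*_β(u, ẏ) - ẏ‖²`. -/
theorem stmt15 {n : ℕ}
    (gstar : EuclideanSpace ℝ (Fin n) → ℝ) (Sg : Set (EuclideanSpace ℝ (Fin n)))
    (hSg : Convex ℝ Sg) (hSgc : IsClosed Sg)
    (hgstar : ConvexOn ℝ Sg gstar)
    (ydot : EuclideanSpace ℝ (Fin n))
    (u : EuclideanSpace ℝ (Fin n))
    -- `gb b = g_b(u, ẏ)` with maximizer `ystar b = y*_b(u, ẏ)`, for every `b > 0`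
    (gb : ℝ → ℝ) (ystar : ℝ → EuclideanSpace ℝ (Fin n))
    (hmax : ∀ b : ℝ, 0 < b → ystar b ∈ Sg ∧
      IsMaxOn (fun z => ⟪u, z⟫ - gstar z - b / 2 * ‖z - ydot‖ ^ 2) Sg (ystar b) ∧
      gb b = ⟪u, ystar b⟫ - gstar (ystar b) - b / 2 * ‖ystar b - ydot‖ ^ 2) :
    ConvexOn ℝ (Ioi (0 : ℝ)) gb ∧
    ∀ b bhat : ℝ, 0 < b → b ≤ bhat →
      gb b ≤ gb bhat + (bhat - b) / 2 * ‖ystar b - ydot‖ ^ 2 := by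
  constructor
  · refine ⟨convex_Ioi 0, ?_⟩
    intro b1 hb1 b2 hb2 s t hs ht hst
    have hb1' : (0:ℝ) < b1 := hb1
    have hb2' : (0:ℝ) < b2 := hb2
    have hb : (0:ℝ) < s * b1 + t * b2 := by
      rcases eq_or_lt_of_le hs with hs0 | hs0
      · simp [← hs0] at hst ⊢; nlinarith
      · nlinarith
    obtain ⟨hmem, hmaxb, heq⟩ := hmax _ hb
    obtain ⟨-, hmax1, heq1⟩ := hmax _ hb1'
    obtain ⟨-, hmax2, heq2⟩ := hmax _ hb2'
    have h1 := hmax1 hmem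
    have h2 := hmax2 hmem
    simp only [Set.mem_setOf_eq] at h1 h2
    simp only [smul_eq_mul]
    rw [heq]
    have key : ⟪u, ystar (s * b1 + t * b2)⟫ - gstar (ystar (s * b1 + t * b2)) -
        (s * b1 + t * b2) / 2 * ‖ystar (s * b1 + t * b2) - ydot‖ ^ 2
        = s * (⟪u, ystar (s * b1 + t * b2)⟫ - gstar (ystar (s * b1 + t * b2)) -
            b1 / 2 * ‖ystar (s * b1 + t * b2) - ydot‖ ^ 2)
        + t * (⟪u, ystar (s * b1 + t * b2)⟫ - gstar (ystar (s * b1 + t * b2)) -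
            b2 / 2 * ‖ystar (s * b1 + t * b2) - ydot‖ ^ 2) := by
      linear_combination (gstar (ystar (s * b1 + t * b2)) - ⟪u, ystar (s * b1 + t * b2)⟫) * hst
    rw [key, heq1, heq2]
    have := mul_le_mul_of_nonneg_left h1 hs
    have := mul_le_mul_of_nonneg_left h2 ht
    linarith
  · intro b bhat hb hble
    have hbhat : (0:ℝ) < bhat := lt_of_lt_of_le hb hble
    obtain ⟨hmem, -, heq⟩ := hmax b hb
    obtain ⟨-, hmaxhat, heqhat⟩ := hmax bhat hbhat
    have h := hmaxhat hmem
    simp only [Set.mem_setOf_eq] at h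
    rw [heq, heqhat] at *
    nlinarith [sq_nonneg ‖ystar b - ydot‖]
end

section
/- Let g* be μ_{g*}-strongly convex with μ_{g*} ≥ 0, β > 0, ẏ ∈ ℝ^n, and u, û ∈ dom g. Define ℓ_β(û, ẏ) := ⟨û, y*_β(u, ẏ)⟩ − g*(y*_β(u, ẏ)). Then: (i) g_β(u, ẏ) + ⟨y*_β(u, ẏ), û − u⟩ ≤ ℓ_β(û, ẏ) − (β/2)‖y*_β(u, ẏ) − ẏ‖²; and (ii) for every subgradient v ∈ ∂g(û), ℓ_β(û, ẏ) ≤ g(û) − (μ_{g*}/2)‖y*_β(u, ẏ) − v‖². -/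
open RealInnerProductSpace Set

/-- Lemma 4(d): with `g*` `μ_{g*}`-strongly convex (`μ_{g*} ≥ 0`),
`β > 0`, `ẏ ∈ ℝ^n`, `u, û ∈ dom g`, and `ℓ_β(û, ẏ) := ⟪û, y*_β(u, ẏ)⟫ - g*(y*_β(u, ẏ))`:
(i) `g_β(u, ẏ) + ⟪y*_β(u, ẏ), û - u⟫ ≤ ℓ_β(û, ẏ) - (β/2)‖y*_β(u, ẏ) - ẏ‖²`, and
(ii) for every subgradient `v ∈ ∂g(û)`,
`ℓ_β(û, ẏ) ≤ g(û) - (μ_{g*}/2)‖y*_β(u, ẏ) - v‖²`. -/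
theorem stmt16 {n : ℕ}
    (g : EuclideanSpace ℝ (Fin n) → ℝ) (Sgdom : Set (EuclideanSpace ℝ (Fin n)))
    (hSgdom : Convex ℝ Sgdom) (hSgdomc : IsClosed Sgdom)
    (hg : ConvexOn ℝ Sgdom g)
    (gstar : EuclideanSpace ℝ (Fin n) → ℝ) (Sgstar : Set (EuclideanSpace ℝ (Fin n)))
    (hSgstar : Convex ℝ Sgstar)
    (μg : ℝ) (hμg : 0 ≤ μg)
    -- `g*` is `μ_{g*}`-strongly convex
    (hgstar : ConvexOn ℝ Sgstar (fun y => gstar y - μg / 2 * ‖y‖ ^ 2))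
    -- `g*` is the Fenchel conjugate of `g` (finite on its domain `Sgstar`)
    (hconj : ∀ z ∈ Sgstar,
      IsLUB {r : ℝ | ∃ u' ∈ Sgdom, r = ⟪z, u'⟫ - g u'} (gstar z))
    -- every subgradient of `g` belongs to `dom g* = Sgstar`
    (hsubdom : ∀ u' ∈ Sgdom, ∀ v : EuclideanSpace ℝ (Fin n),
      (∀ w ∈ Sgdom, g u' + ⟪v, w - u'⟫ ≤ g w) → v ∈ Sgstar)
    (β : ℝ) (hβ : 0 < β)
    (ydot : EuclideanSpace ℝ (Fin n))
    (u uhat : EuclideanSpace ℝ (Fin n)) (hu : u ∈ Sgdom) (huhat : uhat ∈ Sgdom)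
    -- `y*_β(u, ẏ)`, the (unique) maximizer defining `g_β(u, ẏ)`
    (ystar : EuclideanSpace ℝ (Fin n)) (hystarmem : ystar ∈ Sgstar)
    (hystar : IsMaxOn (fun z => ⟪u, z⟫ - gstar z - β / 2 * ‖z - ydot‖ ^ 2) Sgstar ystar) :
    -- (i)
    ((⟪u, ystar⟫ - gstar ystar - β / 2 * ‖ystar - ydot‖ ^ 2) + ⟪ystar, uhat - u⟫ ≤
      (⟪uhat, ystar⟫ - gstar ystar) - β / 2 * ‖ystar - ydot‖ ^ 2) ∧
    -- (ii)
    (∀ v : EuclideanSpace ℝ (Fin n),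
      (∀ w ∈ Sgdom, g uhat + ⟪v, w - uhat⟫ ≤ g w) →
      ⟪uhat, ystar⟫ - gstar ystar ≤ g uhat - μg / 2 * ‖ystar - v‖ ^ 2) := by
  constructor
  · have h1 : ⟪ystar, uhat - u⟫ = ⟪uhat, ystar⟫ - ⟪u, ystar⟫ := by
      rw [inner_sub_right, real_inner_comm uhat ystar, real_inner_comm u ystar]
    linarith [h1.le, h1.ge]
  · intro v hv
    have hvmem : v ∈ Sgstar := hsubdom uhat huhat v hv
    -- gstar v = ⟪v, uhat⟫ - g uhat
    have hlub := hconj v hvmem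
    have hmem : (⟪v, uhat⟫ - g uhat) ∈ {r : ℝ | ∃ u' ∈ Sgdom, r = ⟪v, u'⟫ - g u'} :=
      ⟨uhat, huhat, rfl⟩
    have hub : (⟪v, uhat⟫ - g uhat) ∈ upperBounds {r : ℝ | ∃ u' ∈ Sgdom, r = ⟪v, u'⟫ - g u'} := by
      rintro r ⟨u', hu', rfl⟩
      have := hv u' hu'
      rw [inner_sub_right] at this
      linarith
    have hgv : gstar v = ⟪v, uhat⟫ - g uhat :=
      le_antisymm (hlub.2 hub) (hlub.1 hmem)
    -- lower bound for gstar at any point of Sgstar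
    have hlow : ∀ z ∈ Sgstar, ⟪z, uhat⟫ - g uhat ≤ gstar z := fun z hz =>
      (hconj z hz).1 ⟨uhat, huhat, rfl⟩
    set a := gstar v with ha
    set b := gstar ystar with hb
    set c := ‖ystar - v‖ ^ 2 with hc
    have hcnn : 0 ≤ c := by positivity
    set ip := ⟪ystar - v, uhat⟫ with hip
    -- key: for all t ∈ (0,1], ip ≤ b - a - μg/2 * (1-t) * c
    have key : ∀ t : ℝ, 0 < t → t ≤ 1 → ip ≤ b - a - μg / 2 * ((1 - t) * c) := by
      intro t ht0 ht1
      set zt := (1 - t) • v + t • ystar with hzt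
      have hztmem : zt ∈ Sgstar := hSgstar hvmem hystarmem (by linarith) ht0.le (by ring)
      have hconv := hgstar.2 hvmem hystarmem (by linarith : (0:ℝ) ≤ 1 - t) ht0.le (by ring)
      simp only [smul_eq_mul] at hconv
      have hnorm : ‖zt‖ ^ 2 = (1 - t) * ‖v‖ ^ 2 + t * ‖ystar‖ ^ 2 - t * (1 - t) * c := by
        have e1 : ‖zt‖ ^ 2 = ⟪zt, zt⟫ := (real_inner_self_eq_norm_sq zt).symm
        have e2 : ‖v‖ ^ 2 = ⟪v, v⟫ := (real_inner_self_eq_norm_sq v).symm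
        have e3 : ‖ystar‖ ^ 2 = ⟪ystar, ystar⟫ := (real_inner_self_eq_norm_sq ystar).symm
        have e4 : c = ⟪ystar - v, ystar - v⟫ := (real_inner_self_eq_norm_sq _).symm
        rw [e1, e2, e3, e4, hzt]
        simp only [inner_add_left, inner_add_right, inner_smul_left, inner_smul_right,
          inner_sub_left, inner_sub_right, RCLike.conj_to_real]
        rw [real_inner_comm ystar v]
        ring
      -- lower bound at zt
      have hlowzt := hlow zt hztmem
      have hzsub : ⟪zt, uhat⟫ = ⟪v, uhat⟫ + t * ip := by
        rw [hzt, inner_add_left, inner_smul_left, inner_smul_left, hip, inner_sub_left]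
        simp [RCLike.conj_to_real]
        ring
      have hA : a + t * ip ≤ gstar zt := by
        rw [hgv] at *
        rw [hzsub] at hlowzt
        linarith
      have hB : gstar zt ≤ (1 - t) * a + t * b - μg / 2 * (t * (1 - t) * c) := by
        have := hconv
        rw [hnorm] at this
        nlinarith
      have := hA.trans hB
      have hdiv : t * ip ≤ t * (b - a - μg / 2 * ((1 - t) * c)) := by nlinarith
      exact le_of_mul_le_mul_left (by linarith [hdiv]) ht0
    -- pass to the limit t → 0
    have hK : ip ≤ b - a - μg / 2 * c := by
      have hKnn : 0 ≤ μg / 2 * c := by positivity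
      refine le_of_forall_pos_le_add ?_
      intro ε hε
      set K := μg / 2 * c with hKdef
      set t := min 1 (ε / (K + 1)) with htdef
      have ht0 : 0 < t := lt_min one_pos (by positivity)
      have ht1 : t ≤ 1 := min_le_left _ _
      have ht2 : t ≤ ε / (K + 1) := min_le_right _ _
      have hKt : K * t ≤ ε := by
        have h1 : K * t ≤ K * (ε / (K + 1)) :=
          mul_le_mul_of_nonneg_left ht2 hKnn
        have h2 : K * (ε / (K + 1)) ≤ ε := by
          rw [mul_div_assoc']
          rw [div_le_iff₀ (by linarith : (0:ℝ) < K + 1)]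
          nlinarith
        linarith
      have := key t ht0 ht1
      have : ip ≤ b - a - K + K * t := by
        rw [hKdef] at *
        nlinarith
      linarith
    -- conclude
    have hsym : ⟪ystar, uhat⟫ = ⟪uhat, ystar⟫ := real_inner_comm _ _
    have hips : ip = ⟪uhat, ystar⟫ - ⟪v, uhat⟫ := by
      rw [hip, inner_sub_left, hsym]
    linarith [hK, hips.le, hips.ge, hgv.le, hgv.ge]
end

section
/- Set τ₀ := 1 and for each k ≥ 1 consider the cubic equation τ³ + τ² + τ_{k−1}² τ − τ_{k−1}² = 0 in τ. This equation has a unique solution τ_k in (0, 1), so the sequence (τ_k) is well defined; it satisfies 1/(k+1) ≤ τ_k ≤ 2/(k+2) for all k ≥ 0, and ∏_{i=1}^{k}(1 − τ_i) ≤ 1/(k+1). Moreover, if β_k := β_{k−1}/(1 + τ_k) for a given β₀ > 0, then β_k ≤ 2β₀/(k+2). -/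
open Set

private lemma root_le (a t x : ℝ) (ht : 0 < t) (hx : 0 < x)
    (heq : t ^ 3 + t ^ 2 + a ^ 2 * t - a ^ 2 = 0)
    (hfx : 0 ≤ x ^ 3 + x ^ 2 + a ^ 2 * x - a ^ 2) : t ≤ x := by
  by_contra h
  push_neg at h
  nlinarith [mul_pos ht hx, sq_nonneg a, sq_nonneg (t + x)]

private lemma root_ge (a t x : ℝ) (ht : 0 < t) (hx : 0 < x)
    (heq : t ^ 3 + t ^ 2 + a ^ 2 * t - a ^ 2 = 0)
    (hfx : x ^ 3 + x ^ 2 + a ^ 2 * x - a ^ 2 ≤ 0) : x ≤ t := by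
  by_contra h
  push_neg at h
  nlinarith [mul_pos ht hx, sq_nonneg a, sq_nonneg (t + x)]

/-- Lemma 5(b): with `τ₀ = 1` and `τ_k` the unique root in `(0,1)`
of `τ³ + τ² + τ_{k-1}²τ - τ_{k-1}² = 0`, the sequence is well defined,
`1/(k+1) ≤ τ_k ≤ 2/(k+2)`, `∏_{i=1}^{k}(1-τ_i) ≤ 1/(k+1)`, and if
`β_k = β_{k-1}/(1+τ_k)` with `β₀ > 0` then `β_k ≤ 2β₀/(k+2)`. -/
theorem stmt18 (τ : ℕ → ℝ) (hτ0 : τ 0 = 1)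
    (hτ : ∀ k, τ (k + 1) ∈ Ioo (0 : ℝ) 1 ∧
      (τ (k + 1)) ^ 3 + (τ (k + 1)) ^ 2 + (τ k) ^ 2 * τ (k + 1) - (τ k) ^ 2 = 0)
    (β : ℕ → ℝ) (hβ0 : 0 < β 0)
    (hβrec : ∀ k, β (k + 1) = β k / (1 + τ (k + 1))) :
    -- the cubic has a unique root in `(0, 1)`, so the sequence is well defined
    (∀ k : ℕ, ∃! t : ℝ, t ∈ Ioo (0 : ℝ) 1 ∧
      t ^ 3 + t ^ 2 + (τ k) ^ 2 * t - (τ k) ^ 2 = 0) ∧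
    (∀ k : ℕ, 1 / ((k : ℝ) + 1) ≤ τ k ∧ τ k ≤ 2 / ((k : ℝ) + 2)) ∧
    (∀ k : ℕ, ∏ i ∈ Finset.Icc 1 k, (1 - τ i) ≤ 1 / ((k : ℝ) + 1)) ∧
    (∀ k : ℕ, β k ≤ 2 * β 0 / ((k : ℝ) + 2)) := by
  have hpos : ∀ k, 0 < τ k := by
    intro k
    cases k with
    | zero => rw [hτ0]; norm_num
    | succ n => exact (hτ n).1.1
  -- uniqueness
  have huniq : ∀ k : ℕ, ∃! t : ℝ, t ∈ Ioo (0 : ℝ) 1 ∧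
      t ^ 3 + t ^ 2 + (τ k) ^ 2 * t - (τ k) ^ 2 = 0 := by
    intro k
    refine ⟨τ (k + 1), ⟨(hτ k).1, (hτ k).2⟩, ?_⟩
    rintro s ⟨⟨hs0, hs1⟩, hseq⟩
    have h1 := (hτ k).1.1
    have h2 := (hτ k).2
    have key : (s - τ (k + 1)) *
        (s ^ 2 + s * τ (k + 1) + (τ (k + 1)) ^ 2 + s + τ (k + 1) + (τ k) ^ 2) = 0 := by
      linear_combination hseq - h2
    have hF : 0 < s ^ 2 + s * τ (k + 1) + (τ (k + 1)) ^ 2 + s + τ (k + 1) + (τ k) ^ 2 := by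
      nlinarith [mul_pos hs0 h1, sq_nonneg (τ k)]
    have := mul_eq_zero.mp key
    rcases this with h | h
    · linarith
    · linarith
  -- bounds, by induction
  have hbnd : ∀ k : ℕ, 1 / ((k : ℝ) + 1) ≤ τ k ∧ τ k ≤ 2 / ((k : ℝ) + 2) := by
    intro k
    induction k with
    | zero => rw [hτ0]; norm_num
    | succ n ih =>
      obtain ⟨hl, hu⟩ := ih
      set a := τ n with ha
      set t := τ (n + 1) with htdef
      have ht0 : 0 < t := (hτ n).1.1
      have heq : t ^ 3 + t ^ 2 + a ^ 2 * t - a ^ 2 = 0 := (hτ n).2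
      have ha0 : 0 < a := hpos n
      have hn : (0 : ℝ) ≤ (n : ℝ) := Nat.cast_nonneg n
      have hn2 : (0 : ℝ) < (n : ℝ) + 2 := by linarith
      have hn3 : (0 : ℝ) < (n : ℝ) + 3 := by linarith
      have hn1 : (0 : ℝ) < (n : ℝ) + 1 := by linarith
      have ha2 : a ^ 2 * ((n:ℝ) + 2) ^ 2 ≤ 4 := by
        rw [le_div_iff₀ hn2] at hu
        nlinarith [mul_pos ha0 hn2]
      have ha1 : 1 ≤ a ^ 2 * ((n:ℝ) + 1) ^ 2 := by
        rw [div_le_iff₀ hn1] at hl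
        nlinarith [mul_pos ha0 hn1]
      constructor
      · -- lower bound: 1/(n+2) ≤ t
        have hx : (0:ℝ) < 1 / ((n:ℝ) + 2) := by positivity
        have hfx : (1/((n:ℝ)+2)) ^ 3 + (1/((n:ℝ)+2)) ^ 2 + a ^ 2 * (1/((n:ℝ)+2)) - a ^ 2 ≤ 0 := by
          have hrw : (1/((n:ℝ)+2)) ^ 3 + (1/((n:ℝ)+2)) ^ 2 + a ^ 2 * (1/((n:ℝ)+2)) - a ^ 2
              = (1 + ((n:ℝ)+2) + a^2*((n:ℝ)+2)^2 - a^2*((n:ℝ)+2)^3) / ((n:ℝ)+2)^3 := by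
            field_simp
          rw [hrw]
          apply div_nonpos_of_nonpos_of_nonneg _ (by positivity)
          nlinarith [mul_nonneg (sub_nonneg.mpr ha1) (by positivity : (0:ℝ) ≤ (n:ℝ)+2), sq_nonneg a]
        have := root_ge a t (1/((n:ℝ)+2)) ht0 hx heq hfx
        push_cast
        have e : ((n:ℝ) + 1) + 1 = (n:ℝ) + 2 := by ring
        rw [e]
        exact this
      · -- upper bound: t ≤ 2/(n+3)
        have hx : (0:ℝ) < 2 / ((n:ℝ) + 3) := by positivity
        have hfx : 0 ≤ (2/((n:ℝ)+3)) ^ 3 + (2/((n:ℝ)+3)) ^ 2 + a ^ 2 * (2/((n:ℝ)+3)) - a ^ 2 := by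
          have hrw : (2/((n:ℝ)+3)) ^ 3 + (2/((n:ℝ)+3)) ^ 2 + a ^ 2 * (2/((n:ℝ)+3)) - a ^ 2
              = (8 + 4*((n:ℝ)+3) + 2*a^2*((n:ℝ)+3)^2 - a^2*((n:ℝ)+3)^3) / ((n:ℝ)+3)^3 := by
            field_simp
            ring
          rw [hrw]
          apply div_nonneg _ (by positivity)
          nlinarith [mul_nonneg (sub_nonneg.mpr ha2)
            (by positivity : (0:ℝ) ≤ ((n:ℝ)+1)*((n:ℝ)+3)^2), sq_nonneg a]
        have := root_le a t (2/((n:ℝ)+3)) ht0 hx heq hfx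
        push_cast
        have e : ((n:ℝ) + 1) + 2 = (n:ℝ) + 3 := by ring
        rw [e]
        exact this
  refine ⟨huniq, hbnd, ?_, ?_⟩
  · intro k
    induction k with
    | zero => simp
    | succ n ih =>
      have hprodnn : 0 ≤ ∏ i ∈ Finset.Icc 1 n, (1 - τ i) := by
        apply Finset.prod_nonneg
        intro i hi
        rcases Nat.exists_eq_add_of_le (Finset.mem_Icc.mp hi).1 with ⟨j, rfl⟩
        have := (hτ j).1.2
        simp only [Nat.add_comm 1 j] at *
        linarith [(hτ j).1.2]
      rw [Finset.prod_Icc_succ_top (by omega : 1 ≤ n + 1)]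
      have ht := (hbnd (n+1)).1
      have ht1 : 1 - τ (n+1) ≤ 1 - 1/((n:ℝ)+2) := by
        push_cast at ht
        have e : ((n:ℝ) + 1) + 1 = (n:ℝ) + 2 := by ring
        rw [e] at ht
        linarith
      have h0 : 0 ≤ 1 - τ (n+1) := by linarith [(hτ n).1.2]
      have hn1 : (0:ℝ) < (n:ℝ) + 1 := by positivity
      have hn2 : (0:ℝ) < (n:ℝ) + 2 := by linarith
      calc (∏ i ∈ Finset.Icc 1 n, (1 - τ i)) * (1 - τ (n+1))
          ≤ (1/((n:ℝ)+1)) * (1 - 1/((n:ℝ)+2)) := by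
            apply mul_le_mul ih ht1 h0 (by positivity)
        _ = 1/((n:ℝ)+2) := by
            rw [eq_div_iff hn2.ne']
            field_simp
            ring
        _ ≤ 1/(((n+1 : ℕ) : ℝ) + 1) := le_of_eq (by push_cast; ring)
  · intro k
    induction k with
    | zero =>
      push_cast
      rw [show (0:ℝ)+2 = 2 by norm_num]
      rw [le_div_iff₀ (by norm_num : (0:ℝ) < 2)]
      linarith
    | succ n ih =>
      have hβpos : ∀ m, 0 < β m := by
        intro m
        induction m with
        | zero => exact hβ0
        | succ j ihj =>
          rw [hβrec j]
          exact div_pos ihj (by linarith [(hτ j).1.1])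
      have ht := (hbnd (n+1)).1
      have hn2 : (0:ℝ) < (n:ℝ) + 2 := by positivity
      have hn3 : (0:ℝ) < (n:ℝ) + 3 := by linarith
      have h1t : (0:ℝ) < 1 + τ (n+1) := by linarith [(hτ n).1.1]
      have hstep : β (n+1) ≤ β n * (((n:ℝ)+2)/((n:ℝ)+3)) := by
        rw [hβrec n, div_le_iff₀ h1t]
        have h2 : ((n:ℝ)+3)/((n:ℝ)+2) ≤ 1 + τ (n+1) := by
          push_cast at ht
          rw [div_le_iff₀ hn2]
          have : 1/((n:ℝ)+2) ≤ τ (n+1) := by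
            push_cast at ht
            rw [show ((n:ℝ)+1)+1 = (n:ℝ)+2 by ring] at ht
            exact ht
          have h3 : ((n:ℝ)+2) * (1/((n:ℝ)+2)) = 1 := by field_simp
          nlinarith [this, hn2]
        calc β n = β n * (((n:ℝ)+2)/((n:ℝ)+3)) * (((n:ℝ)+3)/((n:ℝ)+2)) := by
              field_simp
          _ ≤ β n * (((n:ℝ)+2)/((n:ℝ)+3)) * (1 + τ (n+1)) := by
              apply mul_le_mul_of_nonneg_left h2
              have := (hβpos n).le
              positivity
      calc β (n+1) ≤ β n * (((n:ℝ)+2)/((n:ℝ)+3)) := hstep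
        _ ≤ (2 * β 0 / ((n:ℝ)+2)) * (((n:ℝ)+2)/((n:ℝ)+3)) := by
            apply mul_le_mul_of_nonneg_right ih (by positivity)
        _ = 2 * β 0 / ((n:ℝ)+3) := by
            rw [div_mul_div_comm, mul_comm ((n:ℝ)+2), mul_div_mul_right _ _ hn2.ne']
        _ ≤ 2 * β 0 / (((n+1 : ℕ) : ℝ) + 2) := le_of_eq (by push_cast; ring)
end

section
/- Given L_k, L_{k−1} > 0, μ_f > 0, and τ_k, τ_{k−1} ∈ (0, 1), set m_k := (L_k + μ_f)/(L_{k−1} + μ_f) and a_k := L_k/(L_{k−1} + μ_f). Assume (1 − τ_k)[τ_{k−1}² + m_k τ_k] ≥ a_k τ_k and m_k τ_k τ_{k−1}² + m_k² τ_k² ≥ a_k τ_{k−1}². Let x^{k−1}, x^k ∈ ℝ^p and define x̂^k := x^k + (1/ω_k)(x^k − x^{k−1}), where ω_k satisfies max{ (τ_{k−1} + √(τ_{k−1}² + 4a_k))/(2(1 − τ_{k−1})), a_k τ_k/((1 − τ_k)(1 − τ_{k−1})τ_{k−1}) } ≤ ω_k ≤ (τ_{k−1}² + m_k τ_k)/(τ_{k−1}(1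 − τ_{k−1})). Then such ω_k exists (the interval is nonempty), and for every x ∈ ℝ^p: L_k τ_k² ‖(1/τ_k)[x̂^k − (1 − τ_k)x^k] − x‖² − μ_f τ_k (1 − τ_k)‖x^k − x‖² ≤ (1 − τ_k)(L_{k−1} + μ_f) τ_{k−1}² ‖(1/τ_{k−1})[x^k − (1 − τ_{k−1})x^{k−1}] − x‖². -/
open Set

private lemma stmt19_quad {E : Type*} [NormedAddCommGroup E] [InnerProductSpace ℝ E]
    (u v : E) (α β γ : ℝ)
    (hα : 0 ≤ α) (hβ : 0 ≤ β) (hγ : 0 ≤ γ) (h : β ^ 2 ≤ α * γ) :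
    0 ≤ α * ‖v‖ ^ 2 + 2 * β * (inner ℝ u v) + γ * ‖u‖ ^ 2 := by
  have hI : 0 ≤ (inner ℝ u v) + ‖u‖ * ‖v‖ := by
    have := abs_real_inner_le_norm u v
    linarith [(abs_le.1 this).1]
  rcases eq_or_lt_of_le hα with h0 | h0
  · have hβ0 : β = 0 := by nlinarith
    simp only [hβ0, ← h0, zero_mul, mul_zero, zero_add, add_zero]
    positivity
  · have hq : 0 ≤ α * (α * ‖v‖ ^ 2 + 2 * β * (inner ℝ u v) + γ * ‖u‖ ^ 2) := by
      nlinarith [sq_nonneg (α * ‖v‖ - β * ‖u‖), mul_nonneg hβ hI, sq_nonneg ‖u‖,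
        mul_nonneg (mul_nonneg hβ hI) h0.le,
        mul_nonneg (sub_nonneg.2 h) (sq_nonneg ‖u‖)]
    nlinarith [hq]

private lemma stmt19_key (t r ω L S M : ℝ) (ht0 : 0 < t) (hr0 : 0 < r) (hS : 0 < S)
    (H1 : L * t ≤ (1 - t) * (S * r ^ 2 + M * t))
    (H2 : L * S * r ^ 2 ≤ M * t * S * r ^ 2 + M ^ 2 * t ^ 2)
    (P1 : (1 - r) * r * ω * S + L ≤ (1 - r) ^ 2 * ω ^ 2 * S)
    (P2 : L * t ≤ (1 - t) * (1 - r) * r * ω * S)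
    (P3 : r * (1 - r) * ω * S ≤ S * r ^ 2 + M * t) :
    0 ≤ t * (1 - r) ^ 2 * ((1 - t) * M - L) * S * ω ^ 2 + 2 * r * (1 - r) * L * t * S * ω
      - L * (S * r ^ 2 + M * t - L * t) := by
  nlinarith [mul_nonneg (sub_nonneg.2 P2) (sub_nonneg.2 P3),
    mul_nonneg (sub_nonneg.2 P1) (sub_nonneg.2 P3),
    mul_nonneg (sub_nonneg.2 P1) (sub_nonneg.2 P2),
    mul_nonneg (sub_nonneg.2 H1) (sub_nonneg.2 P1),
    mul_nonneg (sub_nonneg.2 H2) (sub_nonneg.2 P1),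
    mul_pos ht0 hr0, mul_pos (mul_pos ht0 hr0) hS]

private lemma stmt19_norm_add_smul {E : Type*} [NormedAddCommGroup E] [InnerProductSpace ℝ E]
    (v u : E) (k : ℝ) :
    ‖v + k • u‖ ^ 2 = ‖v‖ ^ 2 + 2 * (k * (inner ℝ u v)) + k ^ 2 * ‖u‖ ^ 2 := by
  rw [norm_add_sq_real, real_inner_smul_right, norm_smul, real_inner_comm]
  rw [mul_pow, Real.norm_eq_abs, sq_abs]

set_option maxHeartbeats 1000000 in
/-- Lemma 6: under the two conditions (eq:element_cond2) on
`m_k = (L_k+μ_f)/(L_{k-1}+μ_f)` and `a_k = L_k/(L_{k-1}+μ_f)`, the admissible interval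
for `ω_k` is nonempty, and for `x̂^k = x^k + (1/ω_k)(x^k - x^{k-1})` with `ω_k` in that
interval, the estimate (eq:element_est12) holds for every `x ∈ ℝ^p`. -/
theorem stmt19 {p : ℕ}
    (Lk Lkm μf τk τkm : ℝ)
    (hLk : 0 < Lk) (hLkm : 0 < Lkm) (hμf : 0 < μf)
    (hτk : τk ∈ Ioo (0 : ℝ) 1) (hτkm : τkm ∈ Ioo (0 : ℝ) 1)
    -- condition (eq:element_cond2) with `m_k = (L_k+μ_f)/(L_{k-1}+μ_f)`,
    -- `a_k = L_k/(L_{k-1}+μ_f)`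
    (hcond1 : (1 - τk) * (τkm ^ 2 + (Lk + μf) / (Lkm + μf) * τk) ≥
      Lk / (Lkm + μf) * τk)
    (hcond2 : (Lk + μf) / (Lkm + μf) * τk * τkm ^ 2 +
      ((Lk + μf) / (Lkm + μf)) ^ 2 * τk ^ 2 ≥ Lk / (Lkm + μf) * τkm ^ 2) :
    -- the admissible interval for `ω_k` is nonempty (so `ω_k` is well defined)
    max ((τkm + Real.sqrt (τkm ^ 2 + 4 * (Lk / (Lkm + μf)))) / (2 * (1 - τkm)))
        (Lk / (Lkm + μf) * τk / ((1 - τk) * (1 - τkm) * τkm)) ≤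
      (τkm ^ 2 + (Lk + μf) / (Lkm + μf) * τk) / (τkm * (1 - τkm)) ∧
    -- the estimate (eq:element_est12)
    ∀ ωk : ℝ,
      max ((τkm + Real.sqrt (τkm ^ 2 + 4 * (Lk / (Lkm + μf)))) / (2 * (1 - τkm)))
          (Lk / (Lkm + μf) * τk / ((1 - τk) * (1 - τkm) * τkm)) ≤ ωk →
      ωk ≤ (τkm ^ 2 + (Lk + μf) / (Lkm + μf) * τk) / (τkm * (1 - τkm)) →
      ∀ xkm xk x : EuclideanSpace ℝ (Fin p),
        Lk * τk ^ 2 *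
            ‖(1 / τk) • ((xk + (1 / ωk) • (xk - xkm)) - (1 - τk) • xk) - x‖ ^ 2 -
          μf * τk * (1 - τk) * ‖xk - x‖ ^ 2 ≤
        (1 - τk) * (Lkm + μf) * τkm ^ 2 *
          ‖(1 / τkm) • (xk - (1 - τkm) • xkm) - x‖ ^ 2 := by
  obtain ⟨ht0, ht1⟩ := hτk
  obtain ⟨hr0, hr1⟩ := hτkm
  have hc : (0:ℝ) < 1 - τk := by linarith
  have hd : (0:ℝ) < 1 - τkm := by linarith
  have hS : (0:ℝ) < Lkm + μf := by linarith
  set S := Lkm + μf with hSdef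
  set a := Lk / S with ha_def
  set m := (Lk + μf) / S with hm_def
  have haS : a * S = Lk := by rw [ha_def]; field_simp
  have hmS : m * S = Lk + μf := by rw [hm_def]; field_simp
  have ha : 0 < a := by rw [ha_def]; positivity
  have hm : 0 < m := by rw [hm_def]; positivity
  -- the two conditions in homogeneous (denominator-free) form
  have H1 : Lk * τk ≤ (1 - τk) * (S * τkm ^ 2 + (Lk + μf) * τk) := by
    have h := mul_le_mul_of_nonneg_right hcond1.le hS.le
    calc Lk * τk = a * τk * S := by rw [← haS]; ring
    _ ≤ (1 - τk) * (τkm ^ 2 + m * τk) * S := h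
    _ = (1 - τk) * (S * τkm ^ 2 + m * S * τk) := by ring
    _ = (1 - τk) * (S * τkm ^ 2 + (Lk + μf) * τk) := by rw [hmS]
  have H2 : Lk * S * τkm ^ 2 ≤ (Lk + μf) * τk * S * τkm ^ 2 + (Lk + μf) ^ 2 * τk ^ 2 := by
    have h := mul_le_mul_of_nonneg_right hcond2.le (mul_pos hS hS).le
    calc Lk * S * τkm ^ 2 = a * τkm ^ 2 * (S * S) := by rw [← haS]; ring
    _ ≤ (m * τk * τkm ^ 2 + m ^ 2 * τk ^ 2) * (S * S) := h
    _ = (m * S) * τk * S * τkm ^ 2 + (m * S) ^ 2 * τk ^ 2 := by ring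
    _ = (Lk + μf) * τk * S * τkm ^ 2 + (Lk + μf) ^ 2 * τk ^ 2 := by rw [hmS]
  -- nonemptiness of the interval
  have hAC : (τkm + Real.sqrt (τkm ^ 2 + 4 * a)) / (2 * (1 - τkm)) ≤
      (τkm ^ 2 + m * τk) / (τkm * (1 - τkm)) := by
    have hsq : Real.sqrt (τkm ^ 2 + 4 * a) ≤ (τkm ^ 2 + 2 * m * τk) / τkm := by
      have h1 : τkm ^ 2 + 4 * a ≤ ((τkm ^ 2 + 2 * m * τk) / τkm) ^ 2 := by
        rw [div_pow, le_div_iff₀ (by positivity)]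
        nlinarith [hcond2.le, sq_nonneg τkm, sq_nonneg (m * τk)]
      exact (Real.sqrt_le_sqrt h1).trans (le_of_eq (Real.sqrt_sq (by positivity)))
    rw [div_le_div_iff₀ (by positivity) (by positivity)]
    calc (τkm + Real.sqrt (τkm ^ 2 + 4 * a)) * (τkm * (1 - τkm))
        ≤ (τkm + (τkm ^ 2 + 2 * m * τk) / τkm) * (τkm * (1 - τkm)) := by
          apply mul_le_mul_of_nonneg_right (by linarith) (by positivity)
    _ = (τkm ^ 2 + m * τk) * (2 * (1 - τkm)) := by field_simp; ring
  have hBC : a * τk / ((1 - τk) * (1 - τkm) * τkm) ≤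
      (τkm ^ 2 + m * τk) / (τkm * (1 - τkm)) := by
    rw [div_le_div_iff₀ (by positivity) (by positivity)]
    nlinarith [hcond1.le, mul_pos hd hr0]
  refine ⟨max_le hAC hBC, ?_⟩
  intro ωk hlo hhi xkm xk x
  have hAω : (τkm + Real.sqrt (τkm ^ 2 + 4 * a)) / (2 * (1 - τkm)) ≤ ωk :=
    le_trans (le_max_left _ _) hlo
  have hBω : a * τk / ((1 - τk) * (1 - τkm) * τkm) ≤ ωk :=
    le_trans (le_max_right _ _) hlo
  have hω : 0 < ωk := lt_of_lt_of_le (by positivity) hBω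
  -- constraint P2 : lower bound from B
  have P2 : Lk * τk ≤ (1 - τk) * (1 - τkm) * τkm * ωk * S := by
    have h := (div_le_iff₀ (by positivity)).1 hBω
    have h2 := mul_le_mul_of_nonneg_right h hS.le
    calc Lk * τk = a * τk * S := by rw [← haS]; ring
    _ ≤ ωk * ((1 - τk) * (1 - τkm) * τkm) * S := h2
    _ = (1 - τk) * (1 - τkm) * τkm * ωk * S := by ring
  -- constraint P3 : upper bound from C
  have P3 : τkm * (1 - τkm) * ωk * S ≤ S * τkm ^ 2 + (Lk + μf) * τk := by
    have h' := (le_div_iff₀ (by positivity)).1 hhi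
    have h2 := mul_le_mul_of_nonneg_right h' hS.le
    calc τkm * (1 - τkm) * ωk * S = ωk * (τkm * (1 - τkm)) * S := by ring
    _ ≤ (τkm ^ 2 + m * τk) * S := h2
    _ = S * τkm ^ 2 + m * S * τk := by ring
    _ = S * τkm ^ 2 + (Lk + μf) * τk := by rw [hmS]
  -- constraint P1 : lower bound from A (squaring the square root)
  have P1 : (1 - τkm) * τkm * ωk * S + Lk ≤ (1 - τkm) ^ 2 * ωk ^ 2 * S := by
    have h := (div_le_iff₀ (by positivity)).1 hAω
    have hz : Real.sqrt (τkm ^ 2 + 4 * a) ≤ 2 * (1 - τkm) * ωk - τkm := by linarith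
    have hzz : τkm ^ 2 + 4 * a ≤ (2 * (1 - τkm) * ωk - τkm) ^ 2 := by
      have hh1 := Real.mul_self_sqrt (show (0:ℝ) ≤ τkm ^ 2 + 4 * a by positivity)
      have hh2 := mul_self_le_mul_self (Real.sqrt_nonneg (τkm ^ 2 + 4 * a)) hz
      nlinarith [hh1, hh2]
    have h4 : (1 - τkm) * τkm * ωk + a ≤ (1 - τkm) ^ 2 * ωk ^ 2 := by nlinarith [hzz]
    have h5 := mul_le_mul_of_nonneg_right h4 hS.le
    calc (1 - τkm) * τkm * ωk * S + Lk = ((1 - τkm) * τkm * ωk + a) * S := by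
          rw [← haS]; ring
    _ ≤ (1 - τkm) ^ 2 * ωk ^ 2 * S := h5
  -- the three coefficients of the quadratic form
  set α := (1 - τk) * S * τkm ^ 2 + μf * τk * (1 - τk) - Lk * τk ^ 2 with hα_def
  set β := (1 - τk) * S * τkm * (1 - τkm) * ωk - Lk * τk with hβ_def
  set γ := (1 - τk) * S * (1 - τkm) ^ 2 * ωk ^ 2 - Lk with hγ_def
  have hα : 0 ≤ α := by rw [hα_def]; linarith [H1]
  have hβ : 0 ≤ β := by rw [hβ_def]; linarith [P2]
  have hγ : 0 ≤ γ := by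
    rw [hγ_def]
    linarith [mul_le_mul_of_nonneg_left P1 hc.le, P2]
  have hF := stmt19_key τk τkm ωk Lk S (Lk + μf) ht0 hr0 hS
    (by linarith [H1]) (by linarith [H2])
    (by linarith [P1]) (by linarith [P2]) (by linarith [P3])
  have hkey : β ^ 2 ≤ α * γ := by
    rw [hα_def, hβ_def, hγ_def]
    linarith [mul_nonneg hc.le hF]
  -- vector identities
  have hτ0 : τk ≠ 0 := ne_of_gt ht0
  have hτm0 : τkm ≠ 0 := ne_of_gt hr0
  have hω0 : ωk ≠ 0 := ne_of_gt hω
  have e1 : (1 / τk) • ((xk + (1 / ωk) • (xk - xkm)) - (1 - τk) • xk) - x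
      = (xk - x) + (1 / (τk * ωk)) • (xk - xkm) := by
    match_scalars <;> (field_simp; try ring)
  have e2 : (1 / τkm) • (xk - (1 - τkm) • xkm) - x
      = (xk - x) + ((1 - τkm) / τkm) • (xk - xkm) := by
    match_scalars <;> (field_simp; try ring)
  rw [e1, e2, stmt19_norm_add_smul, stmt19_norm_add_smul]
  have hq := stmt19_quad ((1 / ωk) • (xk - xkm)) (xk - x) α β γ hα hβ hγ hkey
  rw [real_inner_smul_left, norm_smul] at hq
  have hns : ‖(1 / ωk) * 1‖ = 1 / ωk := by
    simp [abs_of_pos hω]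
  rw [show ‖(1 / ωk)‖ = 1 / ωk from by rw [Real.norm_eq_abs, abs_of_pos (by positivity)]] at hq
  set X := ‖xk - xkm‖ with hX
  set Y := ‖xk - x‖ with hY
  set I := (inner ℝ (xk - xkm) (xk - x)) with hI
  have e3 : (1 - τk) * S * τkm ^ 2 *
        (Y ^ 2 + 2 * ((1 - τkm) / τkm * I) + ((1 - τkm) / τkm) ^ 2 * X ^ 2)
      - (Lk * τk ^ 2 * (Y ^ 2 + 2 * (1 / (τk * ωk) * I) + (1 / (τk * ωk)) ^ 2 * X ^ 2)
        - μf * τk * (1 - τk) * Y ^ 2)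
      = α * Y ^ 2 + 2 * β * (1 / ωk * I) + γ * (1 / ωk * X) ^ 2 := by
    rw [hα_def, hβ_def, hγ_def]
    field_simp
    ring
  linarith [hq, e3.ge, e3.le]
end
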